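/- arXiv:math/0002008 — 5 statements merged into one kernel-verified Lean document; each statement's English description precedes it below -/
import Mathlib

section
/- Let a < t be real numbers, let d : [a,t] → ℝ be continuous with 0 < d(τ) < 1 for every τ ∈ [a,t], and let f : [a,t] → ℝ be continuous. Then the function τ ↦ f(τ) / (Γ(1 − d(τ)) · (t − τ)^{d(τ)}) is Lebesgue integrable on the interval [a,t), where Γ denotes the real Gamma function. -/
open MeasureTheory Real Set

/-- For `a < t`, `d` continuous on `[a,t]` with values in `(0,1)`, and `f` continuous on
`[a,t]`, the function `τ ↦ f τ / (Γ(1 - d τ) * (t - τ) ^ (d τ))` is Lebesgue integrable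
on `[a, t)`. -/
theorem stmt_0 (a t : ℝ) (hat : a < t) (d f : ℝ → ℝ)
    (hd : ContinuousOn d (Icc a t))
    (hd01 : ∀ τ ∈ Icc a t, 0 < d τ ∧ d τ < 1)
    (hf : ContinuousOn f (Icc a t)) :
    IntegrableOn (fun τ => f τ / (Real.Gamma (1 - d τ) * (t - τ) ^ (d τ))) (Ico a t) := by
  have hIcc : (Ico a t) ⊆ Icc a t := Ico_subset_Icc_self
  have hane : (Icc a t).Nonempty := ⟨a, le_refl a, hat.le⟩
  -- maximum of d
  obtain ⟨τ₀, hτ₀, hmax⟩ := isCompact_Icc.exists_isMaxOn hane hd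
  set D := d τ₀ with hDdef
  have hD1 : D < 1 := (hd01 τ₀ hτ₀).2
  have hD0 : 0 < D := (hd01 τ₀ hτ₀).1
  -- bound on f
  obtain ⟨M, hM⟩ := isCompact_Icc.exists_bound_of_continuousOn hf
  have hM0 : 0 ≤ M := le_trans (norm_nonneg _) (hM a ⟨le_refl a, hat.le⟩)
  -- Gamma lower bound
  have hgc : ContinuousOn (fun τ => Real.Gamma (1 - d τ)) (Icc a t) := by
    intro τ hτ
    have h1 : (0:ℝ) < 1 - d τ := by linarith [(hd01 τ hτ).2]
    have hne : ∀ m : ℕ, 1 - d τ ≠ -m := by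
      intro m
      have : (0:ℝ) ≤ m := Nat.cast_nonneg m
      intro h; rw [h] at h1; linarith
    exact ContinuousAt.comp_continuousWithinAt
      (g := Real.Gamma) (f := fun x => 1 - d x)
      (Real.differentiableAt_Gamma hne).continuousAt
      ((continuousOn_const.sub hd) τ hτ)
  obtain ⟨τ₁, hτ₁, hmin⟩ := isCompact_Icc.exists_isMinOn hane hgc
  set c := Real.Gamma (1 - d τ₁) with hcdef
  have hc0 : 0 < c := Real.Gamma_pos_of_pos (by linarith [(hd01 τ₁ hτ₁).2])
  have hcle : ∀ τ ∈ Icc a t, c ≤ Real.Gamma (1 - d τ) := fun τ hτ => hmin hτ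
  -- measurability
  have hcont : ContinuousOn (fun τ => f τ / (Real.Gamma (1 - d τ) * (t - τ) ^ (d τ)))
      (Ico a t) := by
    apply ContinuousOn.div (hf.mono hIcc)
    · apply ContinuousOn.mul (hgc.mono hIcc)
      apply ContinuousOn.rpow (continuousOn_const.sub continuousOn_id) (hd.mono hIcc)
      intro τ hτ
      exact Or.inl (by have := hτ.2; simp only [Pi.sub_apply, id]; intro h; linarith [sub_eq_zero.mp h])
    · intro τ hτ
      have hx : 0 < t - τ := by linarith [hτ.2]
      have hG : 0 < Real.Gamma (1 - d τ) :=
        Real.Gamma_pos_of_pos (by linarith [(hd01 τ (hIcc hτ)).2])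
      positivity
  -- integrability of the dominating function
  have hint : IntegrableOn (fun τ => (t - τ) ^ (-D)) (Ico a t) := by
    have h1 : IntervalIntegrable (fun x : ℝ => x ^ (-D)) volume 0 (t - a) :=
      intervalIntegral.intervalIntegrable_rpow' (by linarith)
    have h2 : IntervalIntegrable (fun x : ℝ => (t - x) ^ (-D)) volume (t - (t - a)) (t - 0) :=
      (h1.comp_sub_left t).symm
    simp only [sub_sub_cancel, sub_zero] at h2
    have := (intervalIntegrable_iff_integrableOn_Icc_of_le hat.le).mp h2
    exact this.mono_set Ico_subset_Icc_self
  have hintg : IntegrableOn (fun τ => (M / c) * ((t - τ) ^ (-D) + 1)) (Ico a t) :=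
    ((hint.add (integrableOn_const measure_Ico_lt_top.ne)).const_mul _)
  -- the main bound
  apply Integrable.mono' hintg (hcont.aestronglyMeasurable measurableSet_Ico)
  filter_upwards [ae_restrict_mem measurableSet_Ico] with τ hτ
  have hτ' := hIcc hτ
  have hx : 0 < t - τ := by linarith [hτ.2]
  have hG : 0 < Real.Gamma (1 - d τ) :=
    Real.Gamma_pos_of_pos (by linarith [(hd01 τ hτ').2])
  have hr : (0:ℝ) < (t - τ) ^ (d τ) := Real.rpow_pos_of_pos hx _
  have hdτ0 : 0 < d τ := (hd01 τ hτ').1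
  have hdτD : d τ ≤ D := hmax hτ'
  have key : (t - τ) ^ (-(d τ)) ≤ (t - τ) ^ (-D) + 1 := by
    rcases le_or_gt (t - τ) 1 with hle | hgt
    · have : (t - τ) ^ (-(d τ)) ≤ (t - τ) ^ (-D) :=
        Real.rpow_le_rpow_of_exponent_ge hx hle (by linarith)
      linarith
    · have : (t - τ) ^ (-(d τ)) ≤ (t - τ) ^ (0:ℝ) :=
        Real.rpow_le_rpow_of_exponent_le hgt.le (by linarith)
      rw [Real.rpow_zero] at this
      have h2 : (0:ℝ) ≤ (t - τ) ^ (-D) := Real.rpow_nonneg hx.le _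
      linarith
  calc ‖f τ / (Real.Gamma (1 - d τ) * (t - τ) ^ (d τ))‖
      = ‖f τ‖ / (Real.Gamma (1 - d τ) * (t - τ) ^ (d τ)) := by
        rw [norm_div, Real.norm_of_nonneg
          (le_of_lt (show (0:ℝ) < Real.Gamma (1 - d τ) * (t - τ) ^ (d τ) by positivity))]
    _ ≤ M / (c * (t - τ) ^ (d τ)) := by
        apply div_le_div₀ hM0 (hM τ hτ') (by positivity)
        exact mul_le_mul_of_nonneg_right (hcle τ hτ') hr.le
    _ = (M / c) * (t - τ) ^ (-(d τ)) := by
        rw [Real.rpow_neg hx.le, div_mul_eq_div_div_swap, div_div]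
        ring
    _ ≤ (M / c) * ((t - τ) ^ (-D) + 1) :=
        mul_le_mul_of_nonneg_left key (by positivity)
end

section
/- Let a < b be real numbers, let d : [a,b] → ℝ be continuous with 0 < d(τ) < 1 for every τ ∈ [a,b], and let f : [a,b] → ℝ be continuous. Then the function F : [a,b] → ℝ defined by F(t) = ∫_a^t f(τ) / (Γ(1 − d(τ)) · (t − τ)^{d(τ)}) dτ (with F(a) = 0) is continuous on [a,b]. -/
open MeasureTheory Real Set

/-- For `a < b`, `d` continuous on `[a,b]` with values in `(0,1)`, and `f` continuous on
`[a,b]`, the function `F t = ∫_a^t f τ / (Γ(1 - d τ) * (t - τ) ^ (d τ)) dτ` is continuous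
on `[a,b]`. -/
theorem stmt_1 (a b : ℝ) (hab : a < b) (d f : ℝ → ℝ)
    (hd : ContinuousOn d (Icc a b))
    (hd01 : ∀ τ ∈ Icc a b, 0 < d τ ∧ d τ < 1)
    (hf : ContinuousOn f (Icc a b)) :
    ContinuousOn (fun t => ∫ τ in a..t, f τ / (Real.Gamma (1 - d τ) * (t - τ) ^ (d τ)))
      (Icc a b) := by
  have hne : (Icc a b).Nonempty := nonempty_Icc.2 hab.le
  -- maximum of d
  obtain ⟨τδ, hτδ, hδmax⟩ := isCompact_Icc.exists_isMaxOn hne hd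
  set δ := d τδ with hδdef
  have hδ0 : 0 < δ := (hd01 τδ hτδ).1
  have hδ1 : δ < 1 := (hd01 τδ hτδ).2
  have hdle : ∀ τ ∈ Icc a b, d τ ≤ δ := hδmax
  -- maximum of |f|
  obtain ⟨τM, hτM, hMmax⟩ := isCompact_Icc.exists_isMaxOn hne hf.abs
  set M := |f τM| with hMdef
  have hM0 : 0 ≤ M := abs_nonneg _
  have hM : ∀ τ ∈ Icc a b, |f τ| ≤ M := hMmax
  -- continuity of τ ↦ Γ(1 - d τ) on [a,b]
  have hGammaCont : ContinuousOn (fun τ => Real.Gamma (1 - d τ)) (Icc a b) := by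
    intro τ hτ
    have h1 : 0 < 1 - d τ := by linarith [(hd01 τ hτ).2]
    have hΓ : ContinuousAt Real.Gamma (1 - d τ) := by
      refine (Real.differentiableAt_Gamma fun m => ?_).continuousAt
      have : -(m : ℝ) ≤ 0 := neg_nonpos.2 (Nat.cast_nonneg m)
      exact (lt_of_le_of_lt this h1).ne'
    exact show Filter.Tendsto (Real.Gamma ∘ fun τ => 1 - d τ)
        (nhdsWithin τ (Icc a b)) (nhds (Real.Gamma (1 - d τ))) from
      Filter.Tendsto.comp hΓ ((continuousOn_const.sub hd) τ hτ)
  -- minimum of Γ(1 - d ·)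
  obtain ⟨τc, hτc, hcmin⟩ := isCompact_Icc.exists_isMinOn hne hGammaCont
  set c := Real.Gamma (1 - d τc) with hcdef
  have hc0 : 0 < c := Real.Gamma_pos_of_pos (by linarith [(hd01 τc hτc).2])
  have hc : ∀ τ ∈ Icc a b, c ≤ Real.Gamma (1 - d τ) := hcmin
  set L := b - a with hL
  have hL0 : 0 < L := sub_pos.2 hab
  set h : ℝ → ℝ → ℝ :=
    fun t u => f (t - u) / (Real.Gamma (1 - d (t - u)) * u ^ d (t - u)) with hh
  set G : ℝ → ℝ → ℝ := fun t u => (Iic (t - a)).indicator (h t) u with hG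
  set bound : ℝ → ℝ := fun u => (M / c) * (1 + u ^ (-δ)) with hbound
  have hbound0 : ∀ u ∈ Ioc (0:ℝ) L, 0 ≤ bound u := by
    intro u hu
    have h1 : (0:ℝ) ≤ u ^ (-δ) := Real.rpow_nonneg hu.1.le _
    have : (0:ℝ) ≤ M / c := div_nonneg hM0 hc0.le
    simp only [hbound]
    nlinarith
  -- key pointwise bound
  have key : ∀ t ∈ Icc a b, ∀ u ∈ Ioc (0:ℝ) L, |G t u| ≤ bound u := by
    intro t ht u hu
    by_cases hut : u ≤ t - a
    · simp only [hG, indicator_of_mem (mem_Iic.2 hut)]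
      have hτ : t - u ∈ Icc a b := ⟨by linarith, by linarith [hu.1, ht.2]⟩
      have hΓ := hc _ hτ
      have hu0 : 0 < u := hu.1
      have hup : 0 < u ^ d (t - u) := Real.rpow_pos_of_pos hu0 _
      have hΓ0 : 0 < Real.Gamma (1 - d (t - u)) := lt_of_lt_of_le hc0 hΓ
      have hden : 0 < Real.Gamma (1 - d (t - u)) * u ^ d (t - u) := mul_pos hΓ0 hup
      simp only [hh]
      rw [abs_div, abs_of_pos hden]
      have h1 : |f (t - u)| / (Real.Gamma (1 - d (t - u)) * u ^ d (t - u))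
          ≤ M / (c * u ^ d (t - u)) := by
        refine div_le_div₀ hM0 (hM _ hτ) (mul_pos hc0 hup) ?_
        exact mul_le_mul_of_nonneg_right hΓ hup.le
      have h2 : M / (c * u ^ d (t - u)) = (M / c) * u ^ (-(d (t - u))) := by
        rw [Real.rpow_neg hu0.le]
        field_simp
      have h3 : u ^ (-(d (t - u))) ≤ 1 + u ^ (-δ) := by
        have hd0' := (hd01 _ hτ).1
        have hdδ := hdle _ hτ
        have hnn : (0:ℝ) ≤ u ^ (-δ) := Real.rpow_nonneg hu0.le _
        rcases le_total u 1 with h1u | h1u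
        · have := Real.rpow_le_rpow_of_exponent_ge hu0 h1u (neg_le_neg hdδ)
          linarith
        · have := Real.rpow_le_rpow_of_exponent_le h1u
            (by linarith : -(d (t - u)) ≤ (0:ℝ))
          rw [Real.rpow_zero] at this
          linarith
      calc |f (t - u)| / (Real.Gamma (1 - d (t - u)) * u ^ d (t - u))
          ≤ (M / c) * u ^ (-(d (t - u))) := h2 ▸ h1
        _ ≤ (M / c) * (1 + u ^ (-δ)) :=
            mul_le_mul_of_nonneg_left h3 (div_nonneg hM0 hc0.le)
    · simp only [hG, indicator_of_notMem (by simpa using hut : u ∉ Iic (t - a)),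
        abs_zero]
      exact hbound0 u hu
  -- integrability of the bound
  have hbint : Integrable bound (volume.restrict (Ioc 0 L)) := by
    have h1 : IntervalIntegrable (fun u : ℝ => u ^ (-δ)) volume 0 L :=
      intervalIntegral.intervalIntegrable_rpow' (by linarith)
    have h2 : IntegrableOn (fun u : ℝ => u ^ (-δ)) (Ioc 0 L) :=
      (intervalIntegrable_iff_integrableOn_Ioc_of_le hL0.le).1 h1
    have h3 : IntegrableOn (fun _ : ℝ => (1:ℝ)) (Ioc 0 L) :=
      integrableOn_const measure_Ioc_lt_top.ne
    exact (h3.add h2).const_mul (M / c)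
  -- the substitution identity
  have hFeq : ∀ t ∈ Icc a b,
      (∫ τ in a..t, f τ / (Real.Gamma (1 - d τ) * (t - τ) ^ (d τ)))
        = ∫ u in Ioc 0 L, G t u := by
    intro t ht
    have h1 := intervalIntegral.integral_comp_sub_left
      (a := 0) (b := t - a)
      (fun τ => f τ / (Real.Gamma (1 - d τ) * (t - τ) ^ (d τ))) t
    simp only [sub_sub_cancel, sub_zero] at h1
    rw [← h1, intervalIntegral.integral_of_le (by linarith [ht.1] : (0:ℝ) ≤ t - a)]
    have hset : Ioc (0:ℝ) L ∩ Iic (t - a) = Ioc 0 (t - a) := by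
      rw [Ioc_inter_Iic, min_eq_right (by linarith [ht.2])]
    rw [show (∫ u in Ioc 0 L, G t u) = ∫ u in Ioc (0:ℝ) L ∩ Iic (t - a), h t u from
      setIntegral_indicator measurableSet_Iic, hset]
  -- continuity of the dominated family
  have main : ContinuousOn (fun t => ∫ u in Ioc 0 L, G t u) (Icc a b) := by
    intro t₀ ht₀
    refine continuousWithinAt_of_dominated (bound := bound) ?_ ?_ hbint ?_
    · -- measurability
      filter_upwards [self_mem_nhdsWithin] with t ht
      have hcont : ContinuousOn (h t) (Ioc 0 (t - a)) := by
        have hmaps : MapsTo (fun u => t - u) (Ioc 0 (t - a)) (Icc a b) := by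
          intro u hu
          simp only [mem_Icc]
          exact ⟨by linarith [hu.2], by linarith [hu.1, ht.2]⟩
        have hsub : ContinuousOn (fun u : ℝ => t - u) (Ioc 0 (t - a)) :=
          (continuous_const.sub continuous_id).continuousOn
        have hfc : ContinuousOn (fun u => f (t - u)) (Ioc 0 (t - a)) :=
          hf.comp hsub hmaps
        have hΓc : ContinuousOn (fun u => Real.Gamma (1 - d (t - u)))
            (Ioc 0 (t - a)) := hGammaCont.comp hsub hmaps
        have hrc : ContinuousOn (fun u : ℝ => u ^ d (t - u)) (Ioc 0 (t - a)) :=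
          ContinuousOn.rpow continuousOn_id (hd.comp hsub hmaps)
            fun u hu => Or.inl (ne_of_gt hu.1)
        refine hfc.div (hΓc.mul hrc) fun u hu => ?_
        have hτ := hmaps hu
        exact ne_of_gt (mul_pos (lt_of_lt_of_le hc0 (hc _ hτ))
          (Real.rpow_pos_of_pos hu.1 _))
      have h1 : AEStronglyMeasurable (h t) (volume.restrict (Ioc 0 (t - a))) :=
        hcont.aestronglyMeasurable measurableSet_Ioc
      have h2 : AEStronglyMeasurable ((Ioc (0:ℝ) (t - a)).indicator (h t))
          (volume.restrict (Ioc 0 L)) :=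
        ((aestronglyMeasurable_indicator_iff measurableSet_Ioc).2 h1).restrict
      refine h2.congr ?_
      refine (ae_restrict_iff' measurableSet_Ioc).2 (ae_of_all _ fun u hu => ?_)
      by_cases hle : u ≤ t - a
      · rw [indicator_of_mem (mem_Ioc.2 ⟨hu.1, hle⟩)]
        simp only [hG, indicator_of_mem (mem_Iic.2 hle)]
      · rw [indicator_of_notMem (fun hm => hle hm.2)]
        simp only [hG, indicator_of_notMem (fun hm => hle (mem_Iic.1 hm))]
    · -- domination
      filter_upwards [self_mem_nhdsWithin] with t ht
      refine (ae_restrict_iff' measurableSet_Ioc).2 (ae_of_all _ fun u hu => ?_)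
      rw [Real.norm_eq_abs]
      exact key t ht u hu
    · -- a.e. continuity in t
      have h0 : ∀ᵐ u : ℝ, u ≠ t₀ - a := by
        rw [ae_iff]
        simp only [ne_eq, not_not, setOf_eq_eq_singleton]
        exact measure_singleton _
      filter_upwards [ae_restrict_of_ae h0, ae_restrict_mem measurableSet_Ioc]
        with u hune hu
      rcases lt_or_gt_of_ne hune with hlt | hgt
      · -- u < t₀ - a : eventually G t u = h t u, and h · u is continuous
        have hmem' : t₀ - u ∈ Icc a b := ⟨by linarith, by linarith [ht₀.2, hu.1]⟩
        have hψ : Filter.Tendsto (fun t : ℝ => t - u) (nhdsWithin t₀ (Icc a b))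
            (nhdsWithin (t₀ - u) (Icc a b)) := by
          rw [tendsto_nhdsWithin_iff]
          constructor
          · exact ((continuous_id.sub continuous_const).tendsto t₀).mono_left
              nhdsWithin_le_nhds
          · filter_upwards [self_mem_nhdsWithin,
              (eventually_gt_nhds (by linarith : a + u < t₀)).filter_mono
                nhdsWithin_le_nhds] with t hmem hgt'
            exact ⟨by linarith, by linarith [hmem.2, hu.1]⟩
        have hfc : ContinuousWithinAt (fun t => f (t - u)) (Icc a b) t₀ :=
          Filter.Tendsto.comp (hf _ hmem') hψ
        have hΓc : ContinuousWithinAt (fun t => Real.Gamma (1 - d (t - u)))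
            (Icc a b) t₀ :=
          show Filter.Tendsto ((fun τ => Real.Gamma (1 - d τ)) ∘ fun t => t - u)
              (nhdsWithin t₀ (Icc a b)) (nhds (Real.Gamma (1 - d (t₀ - u)))) from
            Filter.Tendsto.comp (hGammaCont _ hmem') hψ
        have hdc : ContinuousWithinAt (fun t => d (t - u)) (Icc a b) t₀ :=
          Filter.Tendsto.comp (hd _ hmem') hψ
        have hrc : ContinuousWithinAt (fun t : ℝ => u ^ d (t - u)) (Icc a b) t₀ :=
          (Real.continuousAt_const_rpow (ne_of_gt hu.1)).comp_continuousWithinAt hdc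
        have hhc : ContinuousWithinAt (fun t => h t u) (Icc a b) t₀ := by
          simp only [hh]
          refine hfc.div (hΓc.mul hrc) ?_
          exact ne_of_gt (mul_pos (lt_of_lt_of_le hc0 (hc _ hmem'))
            (Real.rpow_pos_of_pos hu.1 _))
        refine hhc.congr_of_eventuallyEq ?_ ?_
        · filter_upwards [(eventually_gt_nhds (by linarith : a + u < t₀)).filter_mono
            nhdsWithin_le_nhds] with t hgt'
          simp only [hG, indicator_of_mem (mem_Iic.2 (by linarith : u ≤ t - a))]
        · simp only [hG, indicator_of_mem (mem_Iic.2 (by linarith : u ≤ t₀ - a))]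
      · -- u > t₀ - a : eventually G t u = 0
        refine (continuousWithinAt_const :
          ContinuousWithinAt (fun _ => (0:ℝ)) (Icc a b) t₀).congr_of_eventuallyEq ?_ ?_
        · filter_upwards [(eventually_lt_nhds (by linarith : t₀ < a + u)).filter_mono
            nhdsWithin_le_nhds] with t hlt'
          simp only [hG,
            indicator_of_notMem (by simp only [mem_Iic]; push_neg; linarith : u ∉ Iic (t - a))]
        · simp only [hG,
            indicator_of_notMem (by simp only [mem_Iic]; push_neg; linarith : u ∉ Iic (t₀ - a))]
  exact main.congr fun t ht => hFeq t ht
end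

section
/- Let a < t be real numbers and let f : [a,t] → ℝ be continuous. Then the map d ↦ (1/Γ(d)) ∫_a^t (t − τ)^{d−1} f(τ) dτ is continuous on the open interval (0,1). -/
open MeasureTheory Real Set

/-- For `a < t` and `f` continuous on `[a,t]`, the Riemann–Liouville fractional integral
`d ↦ (1/Γ(d)) ∫_a^t (t − τ)^(d−1) f(τ) dτ` is continuous in the order `d` on `(0,1)`. -/
theorem stmt_4 (a t : ℝ) (hat : a < t) (f : ℝ → ℝ) (hf : ContinuousOn f (Icc a t)) :
    ContinuousOn (fun d : ℝ => (1 / Real.Gamma d) * ∫ τ in a..t, (t - τ) ^ (d - 1) * f τ)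
      (Ioo (0:ℝ) 1) := by
  obtain ⟨M, hM⟩ := isCompact_Icc.exists_bound_of_continuousOn hf
  have hM0 : 0 ≤ M := le_trans (norm_nonneg _) (hM a ⟨le_refl a, hat.le⟩)
  have hfm : AEStronglyMeasurable f (volume.restrict (Set.uIoc a t)) := by
    rw [uIoc_of_le hat.le]
    exact (hf.mono Ioc_subset_Icc_self).aestronglyMeasurable measurableSet_Ioc
  intro d₀ hd₀
  apply ContinuousAt.continuousWithinAt
  apply ContinuousAt.mul
  · have h1 : ∀ m : ℕ, d₀ ≠ -m := by
      intro m
      have : (0:ℝ) ≤ m := Nat.cast_nonneg m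
      have := hd₀.1
      intro h; rw [h] at this; linarith
    simp only [one_div]
    exact ((Real.differentiableAt_Gamma h1).continuousAt.inv₀ (Real.Gamma_ne_zero h1))
  · set lo : ℝ := d₀ / 2 with hlo_def
    set hi : ℝ := (d₀ + 1) / 2 with hhi_def
    have hlo0 : 0 < lo := by have := hd₀.1; simp only [hlo_def]; linarith
    have hhi1 : hi < 1 := by have := hd₀.2; simp only [hhi_def]; linarith
    have hlod : lo < d₀ := by have := hd₀.1; simp only [hlo_def]; linarith
    have hdhi : d₀ < hi := by have := hd₀.2; simp only [hhi_def]; linarith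
    have I1 : IntervalIntegrable (fun τ => (t - τ) ^ (lo - 1)) volume a t := by
      have := (intervalIntegral.intervalIntegrable_rpow' (a := t - a) (b := 0) (r := lo - 1)
        (by linarith)).comp_sub_left t
      simpa using this
    have I2 : IntervalIntegrable (fun τ => (t - τ) ^ (hi - 1)) volume a t := by
      have := (intervalIntegral.intervalIntegrable_rpow' (a := t - a) (b := 0) (r := hi - 1)
        (by linarith)).comp_sub_left t
      simpa using this
    apply intervalIntegral.continuousAt_of_dominated_interval
      (bound := fun τ => ((t - τ) ^ (lo - 1) + (t - τ) ^ (hi - 1)) * M)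
    · refine Filter.Eventually.of_forall fun d => ?_
      have hm : Measurable fun τ : ℝ => (t - τ) ^ (d - 1) := by fun_prop
      exact hm.aestronglyMeasurable.mul hfm
    · filter_upwards [Ioo_mem_nhds hlod hdhi] with d hd
      refine Filter.Eventually.of_forall fun τ hτ => ?_
      rw [uIoc_of_le hat.le] at hτ
      have ht0 : 0 ≤ t - τ := by linarith [hτ.2]
      have hfb : ‖f τ‖ ≤ M := hM τ ⟨hτ.1.le, hτ.2⟩
      have key : (t - τ) ^ (d - 1) ≤ (t - τ) ^ (lo - 1) + (t - τ) ^ (hi - 1) := by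
        rcases eq_or_lt_of_le ht0 with h0 | h0
        · rw [← h0, Real.zero_rpow (by have := hd.2; intro h; rw [sub_eq_zero] at h; subst h; linarith : d - 1 ≠ 0),
            Real.zero_rpow (by linarith : lo - 1 ≠ 0),
            Real.zero_rpow (by linarith : hi - 1 ≠ 0)]
          norm_num
        · rcases le_total (t - τ) 1 with h1 | h1
          · have h2 := Real.rpow_le_rpow_of_exponent_ge h0 h1
              (show lo - 1 ≤ d - 1 by linarith [hd.1])
            have h3 := Real.rpow_nonneg ht0 (hi - 1)
            linarith
          · have h2 := Real.rpow_le_rpow_of_exponent_le h1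
              (show d - 1 ≤ hi - 1 by linarith [hd.2])
            have h3 := Real.rpow_nonneg ht0 (lo - 1)
            linarith
      calc ‖(t - τ) ^ (d - 1) * f τ‖ = (t - τ) ^ (d - 1) * ‖f τ‖ := by
            rw [norm_mul, Real.norm_of_nonneg (Real.rpow_nonneg ht0 _)]
        _ ≤ ((t - τ) ^ (lo - 1) + (t - τ) ^ (hi - 1)) * M :=
            mul_le_mul key hfb (norm_nonneg _)
              (by positivity)
    · exact (I1.add I2).mul_const M
    · have hne : ∀ᵐ τ : ℝ, τ ≠ t := by
        simp [ae_iff, measure_singleton]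
      filter_upwards [hne] with τ hτt hτ
      rw [uIoc_of_le hat.le] at hτ
      have hpos : (0:ℝ) < t - τ := sub_pos.2 (lt_of_le_of_ne hτ.2 hτt)
      exact ((Real.continuousAt_const_rpow (ne_of_gt hpos)).comp
        (continuousAt_id.sub continuousAt_const)).mul continuousAt_const
end

section
/- Let T > 0 and let f : [0,T] → ℝ be continuously differentiable. Then for every t ∈ (0,T], lim_{ε→0⁺} [ f(0) t^{ε−1}/Γ(ε) + (1/Γ(ε)) ∫_0^t (t − τ)^{ε−1} f′(τ) dτ ] = f′(t). -/
open MeasureTheory Real Set Filter Topology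

section Aux

lemma aux_kernel_integrable {t r : ℝ} (hr : -1 < r) (a b : ℝ) :
    IntervalIntegrable (fun τ => (t - τ) ^ r) volume a b := by
  have h := (intervalIntegral.intervalIntegrable_rpow' (a := t - a) (b := t - b) hr).comp_sub_left t
  simpa using h

lemma aux_kernel_integral {t ε : ℝ} (hε : 0 < ε) (a b : ℝ) :
    ∫ τ in a..b, (t - τ) ^ (ε - 1) = ((t - a) ^ ε - (t - b) ^ ε) / ε := by
  have h := intervalIntegral.integral_comp_sub_left (a := a) (b := b)
    (fun s => s ^ (ε - 1)) t
  rw [h, _root_.integral_rpow (Or.inl (by linarith : (-1:ℝ) < ε - 1))]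
  ring_nf

end Aux

/-- For `T > 0` and `f` continuously differentiable on `[0,T]` with derivative `f'`,
for every `t ∈ (0,T]`,
`lim_{ε→0⁺} [ f(0) t^(ε−1)/Γ(ε) + (1/Γ(ε)) ∫_0^t (t − τ)^(ε−1) f'(τ) dτ ] = f'(t)`. -/
theorem stmt_8 (T : ℝ) (hT : 0 < T)
    (f f' : ℝ → ℝ) (hf : ∀ τ ∈ Icc (0:ℝ) T, HasDerivAt f (f' τ) τ)
    (hf' : ContinuousOn f' (Icc 0 T))
    (t : ℝ) (ht : t ∈ Ioc (0:ℝ) T) :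
    Tendsto (fun ε : ℝ => f 0 * t ^ (ε - 1) / Real.Gamma ε +
        (1 / Real.Gamma ε) * ∫ τ in (0:ℝ)..t, (t - τ) ^ (ε - 1) * f' τ)
      (𝓝[>] 0) (𝓝 (f' t)) := by
  obtain ⟨ht0, htT⟩ := ht
  have hgc : ContinuousOn f' (Icc 0 t) := hf'.mono (Icc_subset_Icc le_rfl htT)
  obtain ⟨M, hM⟩ : ∃ M, ∀ τ ∈ Icc (0:ℝ) t, |f' τ| ≤ M := by
    obtain ⟨M, hM⟩ := (isCompact_Icc (a := (0:ℝ)) (b := t)).exists_bound_of_continuousOn hgc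
    exact ⟨M, fun τ hτ => hM τ hτ⟩
  have hM0 : 0 ≤ M := le_trans (abs_nonneg _) (hM t ⟨ht0.le, le_rfl⟩)
  rw [Metric.tendsto_nhds]
  intro η hη
  -- choose δ from continuity of f' at t
  obtain ⟨δ₀, hδ₀, hδ⟩ : ∃ δ > 0, ∀ y ∈ Icc (0:ℝ) t, dist y t < δ →
      dist (f' y) (f' t) < η / 4 := by
    have h := (hgc t ⟨ht0.le, le_rfl⟩)
    rw [Metric.continuousWithinAt_iff] at h
    exact h (η / 4) (by linarith)
  set d : ℝ := min (δ₀ / 2) t with hd_def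
  have hd0 : 0 < d := lt_min (by linarith) ht0
  have hdt : d ≤ t := min_le_right _ _
  have hnear : ∀ τ ∈ Icc (t - d) t, |f' τ - f' t| ≤ η / 4 := by
    intro τ hτ
    have hτ' : τ ∈ Icc (0:ℝ) t := ⟨by linarith [hτ.1, hdt], hτ.2⟩
    have hlt : dist τ t < δ₀ := by
      rw [Real.dist_eq, abs_of_nonpos (by linarith [hτ.2])]
      have h1 := hτ.1
      have hd2 : d ≤ δ₀ / 2 := min_le_left _ _
      linarith
    exact le_of_lt (hδ τ hτ' hlt)
  -- the bounding function
  set bound : ℝ → ℝ := fun ε =>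
    |f 0| * t ^ (ε - 1) * ε / Real.Gamma (ε + 1) +
      (2 * M * (t ^ ε - d ^ ε) + η / 4 * d ^ ε) / Real.Gamma (ε + 1) +
      |f' t| * |t ^ ε / Real.Gamma (ε + 1) - 1| with hbound_def
  -- limits
  have hG : Tendsto (fun ε : ℝ => Real.Gamma (ε + 1)) (𝓝 0) (𝓝 1) := by
    have hc : ContinuousAt Real.Gamma 1 := by
      refine (Real.differentiableAt_Gamma ?_).continuousAt
      intro m h
      have hm : (0:ℝ) ≤ (m:ℝ) := Nat.cast_nonneg m
      have := h.le
      linarith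
    have h2 : Tendsto (fun ε : ℝ => ε + 1) (𝓝 0) (𝓝 1) := by
      simpa using (continuous_add_right (1:ℝ)).tendsto (0:ℝ)
    simpa [Real.Gamma_one, Function.comp_def] using hc.tendsto.comp h2
  have htpow : Tendsto (fun ε : ℝ => t ^ ε) (𝓝 0) (𝓝 1) := by
    simpa using (Real.continuousAt_const_rpow (b := (0:ℝ)) ht0.ne').tendsto
  have htpow' : Tendsto (fun ε : ℝ => t ^ (ε - 1)) (𝓝 0) (𝓝 (t ^ (0 - 1 : ℝ))) :=
    (Real.continuousAt_const_rpow (b := (0:ℝ) - 1) ht0.ne').tendsto.comp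
      (by simpa using (continuous_sub_right (1:ℝ)).tendsto (0:ℝ))
  have hdpow : Tendsto (fun ε : ℝ => d ^ ε) (𝓝 0) (𝓝 1) := by
    simpa using (Real.continuousAt_const_rpow (b := (0:ℝ)) hd0.ne').tendsto
  have hbt : Tendsto bound (𝓝 0) (𝓝 (η / 4)) := by
    have h1 : Tendsto (fun ε : ℝ => |f 0| * t ^ (ε - 1) * ε / Real.Gamma (ε + 1)) (𝓝 0)
        (𝓝 (|f 0| * t ^ (0 - 1 : ℝ) * 0 / 1)) :=
      ((tendsto_const_nhds.mul htpow').mul tendsto_id).div hG one_ne_zero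
    have h2 : Tendsto (fun ε : ℝ =>
        (2 * M * (t ^ ε - d ^ ε) + η / 4 * d ^ ε) / Real.Gamma (ε + 1)) (𝓝 0)
        (𝓝 ((2 * M * (1 - 1) + η / 4 * 1) / 1)) :=
      ((tendsto_const_nhds.mul (htpow.sub hdpow)).add (tendsto_const_nhds.mul hdpow)).div
        hG one_ne_zero
    have h3 : Tendsto (fun ε : ℝ => |f' t| * |t ^ ε / Real.Gamma (ε + 1) - 1|) (𝓝 0)
        (𝓝 (|f' t| * |1 / 1 - 1|)) :=
      tendsto_const_nhds.mul ((htpow.div hG one_ne_zero).sub tendsto_const_nhds).abs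
    have h4 := (h1.add h2).add h3
    rw [hbound_def]
    convert h4 using 2
    norm_num
  have hev : ∀ᶠ ε in 𝓝[>] (0:ℝ), bound ε < η :=
    (hbt.mono_left nhdsWithin_le_nhds).eventually_lt_const (by linarith)
  -- the pointwise estimate
  have hest : ∀ ε : ℝ, 0 < ε →
      dist (f 0 * t ^ (ε - 1) / Real.Gamma ε +
        (1 / Real.Gamma ε) * ∫ τ in (0:ℝ)..t, (t - τ) ^ (ε - 1) * f' τ) (f' t) ≤ bound ε := by
    intro ε hε
    have hr : (-1:ℝ) < ε - 1 := by linarith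
    have hΓ1 : Real.Gamma (ε + 1) = ε * Real.Gamma ε := Real.Gamma_add_one hε.ne'
    have hΓpos : 0 < Real.Gamma (ε + 1) := Real.Gamma_pos_of_pos (by linarith)
    have hΓεpos : 0 < Real.Gamma ε := Real.Gamma_pos_of_pos hε
    have htd0 : (0:ℝ) ≤ t - d := by linarith
    -- kernel facts
    have hknn : ∀ τ : ℝ, τ ≤ t → 0 ≤ (t - τ) ^ (ε - 1) := fun τ hτ =>
      Real.rpow_nonneg (by linarith) _
    have Hk : ∀ a b : ℝ, IntervalIntegrable (fun τ => (t - τ) ^ (ε - 1)) volume a b :=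
      fun a b => aux_kernel_integrable hr a b
    -- integrability of products
    have hcsub : ContinuousOn (fun τ => f' τ - f' t) (Icc 0 t) := hgc.sub continuousOn_const
    have hint_g : IntervalIntegrable (fun τ => (t - τ) ^ (ε - 1) * f' τ) volume 0 t :=
      (Hk 0 t).mul_continuousOn (by rwa [uIcc_of_le ht0.le])
    have hint1 : IntervalIntegrable (fun τ => (t - τ) ^ (ε - 1) * (f' τ - f' t))
        volume 0 (t - d) :=
      (Hk 0 (t - d)).mul_continuousOn
        (by rw [uIcc_of_le htd0]; exact hcsub.mono (Icc_subset_Icc le_rfl (by linarith)))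
    have hint2 : IntervalIntegrable (fun τ => (t - τ) ^ (ε - 1) * (f' τ - f' t))
        volume (t - d) t :=
      (Hk (t - d) t).mul_continuousOn
        (by rw [uIcc_of_le (by linarith)]; exact hcsub.mono (Icc_subset_Icc htd0 le_rfl))
    set R1 : ℝ := ∫ τ in (0:ℝ)..(t - d), (t - τ) ^ (ε - 1) * (f' τ - f' t) with hR1_def
    set R2 : ℝ := ∫ τ in (t - d)..t, (t - τ) ^ (ε - 1) * (f' τ - f' t) with hR2_def
    -- splitting of the main integral
    have hB : (∫ τ in (0:ℝ)..t, (t - τ) ^ (ε - 1) * f' τ)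
        = (R1 + R2) + t ^ ε / ε * f' t := by
      have hadj : R1 + R2 = ∫ τ in (0:ℝ)..t, (t - τ) ^ (ε - 1) * (f' τ - f' t) :=
        intervalIntegral.integral_add_adjacent_intervals hint1 hint2
      have hsub : (∫ τ in (0:ℝ)..t, (t - τ) ^ (ε - 1) * (f' τ - f' t))
          = (∫ τ in (0:ℝ)..t, (t - τ) ^ (ε - 1) * f' τ)
            - (∫ τ in (0:ℝ)..t, (t - τ) ^ (ε - 1)) * f' t := by
        rw [← intervalIntegral.integral_mul_const, ← intervalIntegral.integral_sub hint_g
          ((Hk 0 t).mul_const _)]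
        congr 1; ext τ; ring
      have hJ : (∫ τ in (0:ℝ)..t, (t - τ) ^ (ε - 1)) = t ^ ε / ε := by
        rw [aux_kernel_integral hε, sub_zero, sub_self, Real.zero_rpow hε.ne', sub_zero]
      rw [hadj, hsub, hJ]; ring
    -- bounds on R1 and R2
    have hR1 : |R1| ≤ 2 * M * (t ^ ε - d ^ ε) / ε := by
      have h1 : |R1| ≤ ∫ τ in (0:ℝ)..(t - d), |(t - τ) ^ (ε - 1) * (f' τ - f' t)| :=
        intervalIntegral.abs_integral_le_integral_abs htd0
      have h2 : (∫ τ in (0:ℝ)..(t - d), |(t - τ) ^ (ε - 1) * (f' τ - f' t)|)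
          ≤ ∫ τ in (0:ℝ)..(t - d), (t - τ) ^ (ε - 1) * (2 * M) := by
        refine intervalIntegral.integral_mono_on htd0 hint1.abs ((Hk 0 (t - d)).mul_const _) ?_
        intro τ hτ
        have hτt : τ ≤ t := by linarith [hτ.2]
        have hτ' : τ ∈ Icc (0:ℝ) t := ⟨hτ.1, hτt⟩
        rw [abs_mul, abs_of_nonneg (hknn τ hτt)]
        refine mul_le_mul_of_nonneg_left ?_ (hknn τ hτt)
        have := hM τ hτ'
        have := hM t ⟨ht0.le, le_rfl⟩
        calc |f' τ - f' t| ≤ |f' τ| + |f' t| := abs_sub _ _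
          _ ≤ 2 * M := by linarith
      have h3 : (∫ τ in (0:ℝ)..(t - d), (t - τ) ^ (ε - 1) * (2 * M))
          = 2 * M * (t ^ ε - d ^ ε) / ε := by
        rw [intervalIntegral.integral_mul_const, aux_kernel_integral hε, sub_zero,
          sub_sub_cancel]
        ring
      calc |R1| ≤ _ := h1
        _ ≤ _ := h2
        _ = _ := h3
    have hR2 : |R2| ≤ η / 4 * d ^ ε / ε := by
      have h1 : |R2| ≤ ∫ τ in (t - d)..t, |(t - τ) ^ (ε - 1) * (f' τ - f' t)| :=
        intervalIntegral.abs_integral_le_integral_abs (by linarith)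
      have h2 : (∫ τ in (t - d)..t, |(t - τ) ^ (ε - 1) * (f' τ - f' t)|)
          ≤ ∫ τ in (t - d)..t, (t - τ) ^ (ε - 1) * (η / 4) := by
        refine intervalIntegral.integral_mono_on (by linarith) hint2.abs
          ((Hk (t - d) t).mul_const _) ?_
        intro τ hτ
        rw [abs_mul, abs_of_nonneg (hknn τ hτ.2)]
        exact mul_le_mul_of_nonneg_left (hnear τ hτ) (hknn τ hτ.2)
      have h3 : (∫ τ in (t - d)..t, (t - τ) ^ (ε - 1) * (η / 4))
          = η / 4 * d ^ ε / ε := by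
        rw [intervalIntegral.integral_mul_const, aux_kernel_integral hε, sub_sub_cancel,
          sub_self, Real.zero_rpow hε.ne', sub_zero]
        ring
      calc |R2| ≤ _ := h1
        _ ≤ _ := h2
        _ = _ := h3
    -- key algebraic identity
    have hkey : f 0 * t ^ (ε - 1) / Real.Gamma ε +
          (1 / Real.Gamma ε) * (∫ τ in (0:ℝ)..t, (t - τ) ^ (ε - 1) * f' τ) - f' t
        = f 0 * t ^ (ε - 1) * ε / Real.Gamma (ε + 1)
          + ε / Real.Gamma (ε + 1) * (R1 + R2)
          + f' t * (t ^ ε / Real.Gamma (ε + 1) - 1) := by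
      rw [hB, hΓ1]
      field_simp
      ring
    rw [Real.dist_eq, hkey, hbound_def]
    have habs1 : |f 0 * t ^ (ε - 1) * ε / Real.Gamma (ε + 1)|
        = |f 0| * t ^ (ε - 1) * ε / Real.Gamma (ε + 1) := by
      rw [abs_div, abs_mul, abs_mul, abs_of_pos (Real.rpow_pos_of_pos ht0 _),
        abs_of_pos hε, abs_of_pos hΓpos]
    have habs2 : |ε / Real.Gamma (ε + 1) * (R1 + R2)|
        ≤ (2 * M * (t ^ ε - d ^ ε) + η / 4 * d ^ ε) / Real.Gamma (ε + 1) := by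
      rw [abs_mul, abs_div, abs_of_pos hε, abs_of_pos hΓpos]
      have h1 : |R1 + R2| ≤ 2 * M * (t ^ ε - d ^ ε) / ε + η / 4 * d ^ ε / ε :=
        (abs_add_le _ _).trans (add_le_add hR1 hR2)
      have h2 : ε / Real.Gamma (ε + 1) * (2 * M * (t ^ ε - d ^ ε) / ε + η / 4 * d ^ ε / ε)
          = (2 * M * (t ^ ε - d ^ ε) + η / 4 * d ^ ε) / Real.Gamma (ε + 1) := by
        field_simp
      calc ε / Real.Gamma (ε + 1) * |R1 + R2|
          ≤ ε / Real.Gamma (ε + 1) * (2 * M * (t ^ ε - d ^ ε) / ε + η / 4 * d ^ ε / ε) :=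
            mul_le_mul_of_nonneg_left h1 (div_pos hε hΓpos).le
        _ = _ := h2
    have habs3 : |f' t * (t ^ ε / Real.Gamma (ε + 1) - 1)|
        = |f' t| * |t ^ ε / Real.Gamma (ε + 1) - 1| := abs_mul _ _
    calc |f 0 * t ^ (ε - 1) * ε / Real.Gamma (ε + 1)
          + ε / Real.Gamma (ε + 1) * (R1 + R2)
          + f' t * (t ^ ε / Real.Gamma (ε + 1) - 1)|
        ≤ |f 0 * t ^ (ε - 1) * ε / Real.Gamma (ε + 1)
            + ε / Real.Gamma (ε + 1) * (R1 + R2)|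
          + |f' t * (t ^ ε / Real.Gamma (ε + 1) - 1)| := abs_add_le _ _
      _ ≤ |f 0 * t ^ (ε - 1) * ε / Real.Gamma (ε + 1)|
          + |ε / Real.Gamma (ε + 1) * (R1 + R2)|
          + |f' t * (t ^ ε / Real.Gamma (ε + 1) - 1)| := by
            gcongr
            exact abs_add_le _ _
      _ ≤ _ := by
            rw [habs1, habs3]
            exact add_le_add (add_le_add le_rfl habs2) le_rfl
  filter_upwards [hev, self_mem_nhdsWithin] with ε h1 h2
  exact lt_of_le_of_lt (hest ε h2) h1
end

section
/- Let t > 0 and let f : [0,t] → ℝ be continuous. Then the function F(ε) = (1/Γ(1 − ε)) ∫_0^t (t − τ)^{−ε} f(τ) dτ, defined for ε in a neighborhood of 0, is differentiable at ε = 0 with F(0) = ∫_0^t f(τ) dτ and F′(0) = −∫_0^t (ln(t − τ) + γ) f(τ) dτ, where γ is the Euler–Mascheroni constant. -/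
open MeasureTheory Real Set
open scoped Interval

/-- `|log y| ≤ 4 y^(-1/4) + t` for `y ∈ (0,t)`, `t > 0`. -/
lemma aux_log_bound {t y : ℝ} (ht : 0 < t) (hy : 0 < y) (hyt : y < t) :
    |Real.log y| ≤ 4 * y ^ (-(1/4 : ℝ)) + t := by
  rcases le_or_gt y 1 with h1 | h1
  · have hlog : Real.log y ≤ 0 := Real.log_nonpos hy.le h1
    rw [abs_of_nonpos hlog]
    have h2 : -Real.log y = Real.log y⁻¹ := (Real.log_inv y).symm
    have h3 : Real.log y⁻¹ = 4 * Real.log (y⁻¹ ^ (1/4 : ℝ)) := by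
      rw [Real.log_rpow (by positivity)]; ring
    have h4 : Real.log (y⁻¹ ^ (1/4 : ℝ)) ≤ y⁻¹ ^ (1/4 : ℝ) := by
      have := Real.log_le_sub_one_of_pos (x := y⁻¹ ^ (1/4 : ℝ)) (by positivity)
      linarith
    have h5 : y⁻¹ ^ (1/4 : ℝ) = y ^ (-(1/4 : ℝ)) := by
      rw [Real.inv_rpow hy.le, ← Real.rpow_neg hy.le]
    nlinarith [h4, h5, ht]
  · have hlog : 0 ≤ Real.log y := Real.log_nonneg h1.le
    rw [abs_of_nonneg hlog]
    have := Real.log_le_sub_one_of_pos hy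
    have h0 : 0 ≤ y ^ (-(1/4 : ℝ)) := Real.rpow_nonneg hy.le _
    nlinarith

/-- `y^(-x) ≤ (1+t) * y^(-1/2)` for `y ∈ (0,t)`, `|x| < 1/2`. -/
lemma aux_rpow_bound {t y x : ℝ} (ht : 0 < t) (hy : 0 < y) (hyt : y < t)
    (hx : |x| < 1/2) : y ^ (-x) ≤ (1 + t) * y ^ (-(1/2 : ℝ)) := by
  have habs := abs_lt.mp hx
  have key : y ^ (-x) = y ^ ((1/2 : ℝ) - x) * y ^ (-(1/2 : ℝ)) := by
    rw [← Real.rpow_add hy]; ring_nf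
  rw [key]
  have h0 : (0:ℝ) ≤ (1/2 : ℝ) - x := by linarith
  have h1 : (1/2 : ℝ) - x ≤ 1 := by linarith
  have hle : y ^ ((1/2 : ℝ) - x) ≤ 1 + t := by
    rcases le_or_gt y 1 with h | h
    · have := Real.rpow_le_one hy.le h h0
      linarith
    · have := Real.rpow_le_rpow_of_exponent_le h.le h1
      rw [Real.rpow_one] at this
      linarith
  have hpos : 0 ≤ y ^ (-(1/2 : ℝ)) := Real.rpow_nonneg hy.le _
  exact mul_le_mul_of_nonneg_right hle hpos

/-- For `t > 0` and `f` continuous on `[0,t]`, the function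
`F(ε) = (1/Γ(1−ε)) ∫_0^t (t − τ)^(−ε) f(τ) dτ` is differentiable at `ε = 0` with
`F(0) = ∫_0^t f(τ) dτ` and
`F′(0) = −∫_0^t (ln(t − τ) + γ) f(τ) dτ`, `γ` the Euler–Mascheroni constant. -/
theorem stmt_9 (t : ℝ) (ht : 0 < t) (f : ℝ → ℝ) (hf : ContinuousOn f (Icc 0 t)) :
    (1 / Real.Gamma (1 - (0:ℝ))) * (∫ τ in (0:ℝ)..t, (t - τ) ^ (-(0:ℝ)) * f τ) =
        (∫ τ in (0:ℝ)..t, f τ) ∧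
      HasDerivAt
        (fun ε : ℝ => (1 / Real.Gamma (1 - ε)) * ∫ τ in (0:ℝ)..t, (t - τ) ^ (-ε) * f τ)
        (-∫ τ in (0:ℝ)..t, (Real.log (t - τ) + Real.eulerMascheroniConstant) * f τ) 0 := by
  -- bound for f
  obtain ⟨M, hM⟩ := isCompact_Icc.exists_bound_of_continuousOn hf
  have hM0 : 0 ≤ M := le_trans (norm_nonneg _) (hM 0 ⟨le_refl 0, ht.le⟩)
  have hMf : ∀ τ ∈ Icc (0:ℝ) t, |f τ| ≤ M := by
    intro τ hτ; exact hM τ hτ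
  -- measurability of f on the interval
  have huIoc : Ι (0:ℝ) t = Ioc 0 t := uIoc_of_le ht.le
  have hf_meas : AEStronglyMeasurable f (volume.restrict (Ι (0:ℝ) t)) := by
    rw [huIoc]
    exact (hf.mono Ioc_subset_Icc_self).aestronglyMeasurable measurableSet_Ioc
  have hf_int : IntervalIntegrable f volume 0 t := by
    apply ContinuousOn.intervalIntegrable
    rwa [uIcc_of_le ht.le]
  -- a.e. membership in the open interval
  have h_ae : ∀ᵐ τ : ℝ ∂volume, τ ∈ Ι (0:ℝ) t → τ ∈ Ioo 0 t := by
    have hne : ∀ᵐ τ : ℝ ∂volume, τ ≠ t := by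
      refine ae_iff.mpr ?_
      have : {τ : ℝ | ¬ τ ≠ t} = {t} := by ext τ; simp
      rw [this]; exact measure_singleton t
    filter_upwards [hne] with τ hτ hmem
    rw [huIoc] at hmem
    exact ⟨hmem.1, lt_of_le_of_ne hmem.2 hτ⟩
  -- the inner integral and its derivative
  set F : ℝ → ℝ → ℝ := fun x τ => (t - τ) ^ (-x) * f τ with hF_def
  set F' : ℝ → ℝ → ℝ := fun x τ => ((t - τ) ^ (-x) * (-Real.log (t - τ))) * f τ with hF'_def
  set bound : ℝ → ℝ := fun τ =>
    M * ((1 + t) * (4 * (t - τ) ^ (-(3/4 : ℝ)) + t * (t - τ) ^ (-(1/2 : ℝ)))) with hbound_def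
  have hmeas_rpow : ∀ c : ℝ, Measurable fun τ : ℝ => (t - τ) ^ c := by
    intro c
    have h1 : Measurable fun x : ℝ => x ^ c := by measurability
    exact h1.comp (measurable_const.sub measurable_id)
  have hmeas_log : Measurable fun τ : ℝ => Real.log (t - τ) :=
    Real.measurable_log.comp (measurable_const.sub measurable_id)
  have hF_meas : ∀ᶠ x in nhds (0:ℝ),
      AEStronglyMeasurable (F x) (volume.restrict (Ι (0:ℝ) t)) := by
    refine Filter.Eventually.of_forall fun x => ?_
    exact ((hmeas_rpow (-x)).aestronglyMeasurable).mul hf_meas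
  have hF_int : IntervalIntegrable (F 0) volume 0 t := by
    have : F 0 = f := by funext τ; simp [hF_def]
    rw [this]; exact hf_int
  have hF'_meas : AEStronglyMeasurable (F' 0) (volume.restrict (Ι (0:ℝ) t)) := by
    exact (((hmeas_rpow (-0)).mul hmeas_log.neg).aestronglyMeasurable).mul hf_meas
  have h_bound : ∀ᵐ τ : ℝ ∂volume, τ ∈ Ι (0:ℝ) t →
      ∀ x ∈ Metric.ball (0:ℝ) (1/2), ‖F' x τ‖ ≤ bound τ := by
    filter_upwards [h_ae] with τ hτ hmem x hx
    have hτ' := hτ hmem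
    set y := t - τ with hy_def
    have hy : 0 < y := by simp [hy_def]; linarith [hτ'.2]
    have hyt : y < t := by simp [hy_def]; linarith [hτ'.1]
    have hxlt : |x| < 1/2 := by simpa [Real.dist_eq] using hx
    have hfb : |f τ| ≤ M := hMf τ ⟨hτ'.1.le, hτ'.2.le⟩
    have h1 : |Real.log y| ≤ 4 * y ^ (-(1/4 : ℝ)) + t := aux_log_bound ht hy hyt
    have h2 : y ^ (-x) ≤ (1 + t) * y ^ (-(1/2 : ℝ)) := aux_rpow_bound ht hy hyt hxlt
    have hrpos : 0 ≤ y ^ (-x) := Real.rpow_nonneg hy.le _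
    have h34 : y ^ (-(1/4 : ℝ)) * y ^ (-(1/2 : ℝ)) = y ^ (-(3/4 : ℝ)) := by
      rw [← Real.rpow_add hy]; norm_num
    have hnorm : ‖F' x τ‖ = (y ^ (-x) * |Real.log y|) * |f τ| := by
      simp [hF'_def, abs_mul, abs_of_nonneg hrpos, ← hy_def]
    rw [hnorm]
    have h12 : 0 ≤ y ^ (-(1/2 : ℝ)) := Real.rpow_nonneg hy.le _
    have h14 : 0 ≤ y ^ (-(1/4 : ℝ)) := Real.rpow_nonneg hy.le _
    have hc : 0 ≤ (1 + t) * y ^ (-(1/2 : ℝ)) := mul_nonneg (by linarith) h12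
    have hinner : y ^ (-x) * |Real.log y| ≤
        ((1 + t) * y ^ (-(1/2 : ℝ))) * (4 * y ^ (-(1/4 : ℝ)) + t) :=
      mul_le_mul h2 h1 (abs_nonneg _) hc
    have hstep : (y ^ (-x) * |Real.log y|) * |f τ| ≤
        (((1 + t) * y ^ (-(1/2 : ℝ))) * (4 * y ^ (-(1/4 : ℝ)) + t)) * M :=
      mul_le_mul hinner hfb (abs_nonneg _)
        (mul_nonneg hc (by positivity))
    refine hstep.trans (le_of_eq ?_)
    simp only [hbound_def, ← hy_def]
    linear_combination (4 * M * (1 + t)) * h34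
  have hbound_int : IntervalIntegrable bound volume 0 t := by
    have h1 : IntervalIntegrable (fun τ : ℝ => (t - τ) ^ (-(3/4 : ℝ))) volume 0 t := by
      have := (intervalIntegral.intervalIntegrable_rpow' (a := 0) (b := t)
        (show (-1:ℝ) < -(3/4) by norm_num)).comp_sub_left t
      simpa using this.symm
    have h2 : IntervalIntegrable (fun τ : ℝ => (t - τ) ^ (-(1/2 : ℝ))) volume 0 t := by
      have := (intervalIntegral.intervalIntegrable_rpow' (a := 0) (b := t)
        (show (-1:ℝ) < -(1/2) by norm_num)).comp_sub_left t
      simpa using this.symm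
    have : IntervalIntegrable
        (fun τ => M * ((1 + t) * (4 * (t - τ) ^ (-(3/4:ℝ)) + t * (t - τ) ^ (-(1/2:ℝ)))))
        volume 0 t := (((h1.const_mul 4).add (h2.const_mul t)).const_mul (1+t)).const_mul M
    exact this
  have h_diff : ∀ᵐ τ : ℝ ∂volume, τ ∈ Ι (0:ℝ) t →
      ∀ x ∈ Metric.ball (0:ℝ) (1/2), HasDerivAt (fun x => F x τ) (F' x τ) x := by
    filter_upwards [h_ae] with τ hτ hmem x _
    have hτ' := hτ hmem
    have hy : 0 < t - τ := by linarith [hτ'.2]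
    have h1 : HasDerivAt (fun ε : ℝ => -ε * Real.log (t - τ)) (-Real.log (t - τ)) x := by
      simpa using ((hasDerivAt_id x).neg.mul_const (Real.log (t - τ)))
    have h2 := h1.exp
    have heq : (fun ε : ℝ => Real.exp (-ε * Real.log (t - τ)))
        = fun ε : ℝ => (t - τ) ^ (-ε) := by
      funext ε
      rw [Real.rpow_def_of_pos hy, mul_comm]
    rw [heq] at h2
    have h3 : Real.exp (-x * Real.log (t - τ)) = (t - τ) ^ (-x) := by
      rw [Real.rpow_def_of_pos hy, mul_comm]
    rw [h3] at h2
    exact h2.mul_const (f τ)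
  obtain ⟨hInt, hH⟩ := intervalIntegral.hasDerivAt_integral_of_dominated_loc_of_deriv_le
    (F := F) (F' := F') (x₀ := (0:ℝ)) (bound := bound)
    (Metric.ball_mem_nhds (0:ℝ) (show (0:ℝ) < 1/2 by norm_num)) hF_meas hF_int hF'_meas h_bound hbound_int h_diff
  -- derivative of 1/Γ(1-ε) at 0
  have hΓ : HasDerivAt Real.Gamma (-Real.eulerMascheroniConstant)
      ((fun ε : ℝ => 1 - ε) 0) := by
    simpa using Real.hasDerivAt_Gamma_one
  have h1 : HasDerivAt (fun ε : ℝ => 1 - ε) (-1) 0 := by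
    simpa using (hasDerivAt_id (0:ℝ)).const_sub 1
  have h2 : HasDerivAt (fun ε : ℝ => Real.Gamma (1 - ε)) Real.eulerMascheroniConstant 0 := by
    exact (hΓ.comp 0 h1).congr_deriv (by ring)
  have hG : HasDerivAt (fun ε : ℝ => 1 / Real.Gamma (1 - ε))
      (-Real.eulerMascheroniConstant) 0 := by
    have h3 := h2.inv (by simp [Real.Gamma_one])
    simp only [sub_zero, Real.Gamma_one] at h3
    simp only [one_div]
    exact h3.congr_deriv (by simp)
  -- combine
  have hprod := hG.mul hH
  -- integrability facts for rewriting the target derivative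
  have hlogf_int : IntervalIntegrable (fun τ => Real.log (t - τ) * f τ) volume 0 t := by
    have : (fun τ => Real.log (t - τ) * f τ) = fun τ => -(F' 0 τ) := by
      funext τ; simp [hF'_def] <;> ring
    rw [this]; exact hInt.neg
  have hγf_int : IntervalIntegrable
      (fun τ => Real.eulerMascheroniConstant * f τ) volume 0 t := hf_int.const_mul _
  have hsplit : (∫ τ in (0:ℝ)..t, (Real.log (t - τ) + Real.eulerMascheroniConstant) * f τ)
      = (∫ τ in (0:ℝ)..t, Real.log (t - τ) * f τ)
        + Real.eulerMascheroniConstant * ∫ τ in (0:ℝ)..t, f τ := by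
    rw [← intervalIntegral.integral_const_mul, ← intervalIntegral.integral_add hlogf_int hγf_int]
    congr 1; funext τ; ring
  have hF'0 : (∫ τ in (0:ℝ)..t, F' 0 τ) = -∫ τ in (0:ℝ)..t, Real.log (t - τ) * f τ := by
    rw [← intervalIntegral.integral_neg]
    congr 1; funext τ; simp [hF'_def] <;> ring
  have hF0 : (∫ τ in (0:ℝ)..t, F 0 τ) = ∫ τ in (0:ℝ)..t, f τ := by
    congr 1; funext τ; simp [hF_def]
  constructor
  · simp [Real.Gamma_one]
  · have : (fun ε : ℝ => (1 / Real.Gamma (1 - ε)) * ∫ τ in (0:ℝ)..t, (t - τ) ^ (-ε) * f τ)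
        = fun ε : ℝ => (1 / Real.Gamma (1 - ε)) * ∫ τ in (0:ℝ)..t, F ε τ := rfl
    rw [this]
    refine hprod.congr_deriv ?_
    rw [hF0, hF'0, hsplit]
    simp only [sub_zero, Real.Gamma_one]
    ring
end
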